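/- arXiv:2006.13705 — 2 statements merged into one kernel-verified Lean document; each statement's English description precedes it below -/
import Mathlib

section
/- Let A be an abelian group and X : ℕ → Set_* a tower of pointed sets satisfying the Mittag-Leffler condition. Then: (1) if A is p-divisible for a prime p, then G(X,A) and H(X,A) are p-divisible; (2) if A is divisible, then G(X,A) and H(X,A) are divisible; (3) if A is almost divisible, then G(X,A) and H(X,A) are almost divisible. -/
open CategoryTheory Finsupp

universe u v w

/-- The smash product `Y ∧ A` of a pointed set `(Y, y0)` with an abelian group `A`:
the group of finitely supported functions `Y →₀ A` vanishing at the basepoint,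
i.e. `⊕_{y ∈ Y∖{y0}} A`. -/
def Smash (Y : Type u) (y0 : Y) (A : Type v) [AddCommGroup A] :
    AddSubgroup (Y →₀ A) where
  carrier := {f | f y0 = 0}
  add_mem' := by
    intro a b ha hb
    simp only [Set.mem_setOf_eq, Finsupp.add_apply] at *
    rw [ha, hb, add_zero]
  zero_mem' := by simp
  neg_mem' := by
    intro a ha
    simp only [Set.mem_setOf_eq, Finsupp.neg_apply] at *
    rw [ha, neg_zero]

theorem mem_smash {Y : Type u} {y0 : Y} {A : Type v} [AddCommGroup A] {f : Y →₀ A} :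
    f ∈ Smash Y y0 A ↔ f y0 = 0 := Iff.rfl

/-- The pushforward homomorphism `g_* : Y∧A → Z∧A` induced by a (pointed) map
`g : Y → Z`: `(g_* f)(z) = ∑_{y : g y = z} f y` for `z ≠ z0`, and `(g_* f)(z0) = 0`. -/
noncomputable def smashMap {Y : Type u} {Z : Type v} (y0 : Y) (z0 : Z) (g : Y → Z)
    (A : Type w) [AddCommGroup A] :
    Smash Y y0 A →+ Smash Z z0 A where
  toFun f := ⟨(Finsupp.mapDomain g f.1).erase z0, Finsupp.erase_same⟩
  map_zero' := by
    apply Subtype.ext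
    simp
  map_add' f₁ f₂ := by
    apply Subtype.ext
    show (Finsupp.mapDomain g ((f₁ : Y →₀ A) + (f₂ : Y →₀ A))).erase z0 = _
    rw [Finsupp.mapDomain_add, Finsupp.erase_add]
    rfl

theorem smashMap_comp {Y : Type u} {Z : Type v} {W : Type w} (y0 : Y) (z0 : Z) (w0 : W)
    (g : Y → Z) (g' : Z → W) (hg' : g' z0 = w0)
    (A : Type*) [AddCommGroup A] (f : Smash Y y0 A) :
    smashMap z0 w0 g' A (smashMap y0 z0 g A f) = smashMap y0 w0 (g' ∘ g) A f := by
  classical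
  apply Subtype.ext
  show (Finsupp.mapDomain g' ((Finsupp.mapDomain g f.1).erase z0)).erase w0
      = (Finsupp.mapDomain (g' ∘ g) f.1).erase w0
  rw [Finsupp.mapDomain_comp]
  set h := Finsupp.mapDomain g f.1 with hh
  have key : Finsupp.mapDomain g' (h.erase z0)
      = Finsupp.mapDomain g' h - Finsupp.single w0 (h z0) := by
    have h1 : h.erase z0 = h - Finsupp.single z0 (h z0) := by
      ext a
      by_cases ha : a = z0
      · subst ha; simp
      · simp [Finsupp.erase_ne ha, Finsupp.single_apply, Ne.symm ha, ha]
    rw [h1]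
    have h2 := map_sub (Finsupp.mapDomain.addMonoidHom g') h (Finsupp.single z0 (h z0))
    simp only [Finsupp.mapDomain.addMonoidHom_apply] at h2
    rw [h2, Finsupp.mapDomain_single, hg']
  rw [key]
  ext a
  by_cases ha : a = w0
  · subst ha; simp
  · simp [Finsupp.erase_ne ha, Finsupp.single_apply, Ne.symm ha, ha]
/-- The inverse limit of a diagram of pointed sets, as a subset of the product. -/
def plim {D : Type u} [Category.{v} D] (F : D ⥤ Pointed.{w}) :
    Set (∀ d : D, (F.obj d).X) :=
  {x | ∀ ⦃d d' : D⦄ (u : d ⟶ d'), (F.map u).toFun (x d) = x d'}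

/-- The basepoint of the inverse limit of a diagram of pointed sets. -/
def plimPt {D : Type u} [Category.{v} D] (F : D ⥤ Pointed.{w}) : plim F :=
  ⟨fun d => (F.obj d).point, fun _ _ u => (F.map u).map_point⟩

/-- The inverse limit `lim_D (X ∧ A)` of the diagram of abelian groups obtained by
smashing a diagram of pointed sets with an abelian group `A`. -/
noncomputable def glim {D : Type u} [Category.{v} D] (F : D ⥤ Pointed.{w})
    (A : Type*) [AddCommGroup A] :
    AddSubgroup (∀ d : D, Smash (F.obj d).X (F.obj d).point A) where
  carrier := {h | ∀ ⦃d d' : D⦄ (u : d ⟶ d'),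
      smashMap (F.obj d).point (F.obj d').point (F.map u).toFun A (h d) = h d'}
  add_mem' := by
    intro a b ha hb d d' u
    rw [Pi.add_apply, map_add, ha u, hb u]
    rfl
  zero_mem' := by
    intro d d' u
    rw [Pi.zero_apply, map_zero]
    rfl
  neg_mem' := by
    intro a ha d d' u
    rw [Pi.neg_apply, map_neg, ha u]
    rfl

/-- The natural map `ρ : (lim_D X) ∧ A → lim_D (X ∧ A)`, whose component at `d`
is induced by the projection `lim_D X → X d`. -/
noncomputable def rho {D : Type u} [Category.{v} D] (F : D ⥤ Pointed.{w})
    (A : Type*) [AddCommGroup A] :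
    Smash (plim F) (plimPt F) A →+ glim F A where
  toFun f := ⟨fun d => smashMap (plimPt F) (F.obj d).point (fun x => x.1 d) A f, by
    intro d d' u
    rw [smashMap_comp (plimPt F) (F.obj d).point (F.obj d').point _ _ (F.map u).map_point A f]
    have : ((F.map u).toFun ∘ fun x : plim F => x.1 d) = fun x : plim F => x.1 d' := by
      funext x
      exact x.2 u
    rw [this]⟩
  map_zero' := by
    apply Subtype.ext
    funext d
    show smashMap (plimPt F) (F.obj d).point (fun x => x.1 d) A 0 = (0 : Smash _ _ A)
    exact map_zero _
  map_add' f₁ f₂ := by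
    apply Subtype.ext
    funext d
    show smashMap (plimPt F) (F.obj d).point (fun x => x.1 d) A (f₁ + f₂)
        = smashMap (plimPt F) (F.obj d).point (fun x => x.1 d) A f₁
          + smashMap (plimPt F) (F.obj d).point (fun x => x.1 d) A f₂
    exact map_add _ f₁ f₂
/-- The Mittag-Leffler condition for a diagram of pointed sets indexed by a
preordered set `T` (with structure maps `X(s) → X(t)` for `t ≤ s`): for every `t`
there is `s ≥ t` such that for every `r ≥ s` the images of `X(s)` and of `X(r)`
in `X(t)` coincide. -/
def MittagLeffler {T : Type u} [Preorder T] (F : Tᵒᵖ ⥤ Pointed.{w}) : Prop :=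
  ∀ t : T, ∃ s : T, ∃ hts : t ≤ s, ∀ r : T, ∀ hsr : s ≤ r,
    Set.range (F.map (homOfLE hts).op).toFun
      = Set.range (F.map (homOfLE (hts.trans hsr)).op).toFun
/-- A subgroup `S` of an abelian group `G` is divisible if `nS = S` for all `n ≥ 1`. -/
def DivisibleSubgroup {G : Type*} [AddCommGroup G] (S : AddSubgroup G) : Prop :=
  ∀ n : ℕ, 1 ≤ n → ∀ x ∈ S, ∃ y ∈ S, n • y = x

/-- A subgroup `S` of an abelian group `G` is bounded if `mS = 0` for some `m ≥ 1`. -/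
def BoundedSubgroup {G : Type*} [AddCommGroup G] (S : AddSubgroup G) : Prop :=
  ∃ m : ℕ, 1 ≤ m ∧ ∀ x ∈ S, m • x = 0

/-- A group is almost divisible if it is the (internal) direct sum of a divisible
subgroup and a bounded subgroup. -/
def AlmostDivisible (G : Type*) [AddCommGroup G] : Prop :=
  ∃ D B : AddSubgroup G, IsCompl D B ∧ DivisibleSubgroup D ∧ BoundedSubgroup B

section AuxSmash

variable {Y : Type u} {Z : Type v} {A : Type*} [AddCommGroup A]

theorem smashMap_coe (y0 : Y) (z0 : Z) (g : Y → Z) (f : Smash Y y0 A) :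
    ((smashMap y0 z0 g A f : Smash Z z0 A) : Z →₀ A)
      = (Finsupp.mapDomain g (f : Y →₀ A)).erase z0 := rfl

theorem smash_coe_apply_pt (y0 : Y) (f : Smash Y y0 A) : (f : Y →₀ A) y0 = 0 := f.2

theorem smashMap_apply_ne (y0 : Y) (z0 : Z) (g : Y → Z) (f : Smash Y y0 A) {z : Z}
    (hz : z ≠ z0) :
    ((smashMap y0 z0 g A f : Smash Z z0 A) : Z →₀ A) z
      = Finsupp.mapDomain g (f : Y →₀ A) z := by
  rw [smashMap_coe, Finsupp.erase_ne hz]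

theorem mapDomain_mem (g : Y → Z) (v : Y →₀ A) (S : AddSubgroup A)
    (hv : ∀ y, v y ∈ S) (z : Z) : Finsupp.mapDomain g v z ∈ S := by
  classical
  rw [Finsupp.mapDomain, Finsupp.sum_apply, Finsupp.sum]
  refine AddSubgroup.sum_mem _ fun y _ => ?_
  rw [Finsupp.single_apply]
  split
  · exact hv y
  · exact S.zero_mem

theorem smashMap_mem (y0 : Y) (z0 : Z) (g : Y → Z) (f : Smash Y y0 A) (S : AddSubgroup A)
    (hf : ∀ y, (f : Y →₀ A) y ∈ S) (z : Z) :
    ((smashMap y0 z0 g A f : Smash Z z0 A) : Z →₀ A) z ∈ S := by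
  by_cases hz : z = z0
  · rw [hz, smash_coe_apply_pt]; exact S.zero_mem
  · rw [smashMap_apply_ne _ _ _ _ hz]; exact mapDomain_mem g _ S hf z

theorem smashMap_supp (y0 : Y) (z0 : Z) (g : Y → Z) (f : Smash Y y0 A) (T : Set Y)
    (hf : ∀ y, (f : Y →₀ A) y ≠ 0 → y ∈ T) (z : Z)
    (hz : ((smashMap y0 z0 g A f : Smash Z z0 A) : Z →₀ A) z ≠ 0) : z ∈ g '' T := by
  classical
  have hz0 : z ≠ z0 := by
    rintro rfl
    exact hz (smash_coe_apply_pt _ _)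
  rw [smashMap_apply_ne _ _ _ _ hz0] at hz
  obtain ⟨y, hy, rfl⟩ := Finset.mem_image.1
    (Finsupp.mapDomain_support (Finsupp.mem_support_iff.2 hz))
  exact ⟨y, hf y (Finsupp.mem_support_iff.1 hy), rfl⟩

theorem smashMap_eq_self (y0 : Y) (g : Y → Y) (f : Smash Y y0 A)
    (hg : ∀ y, (f : Y →₀ A) y ≠ 0 → g y = y) : smashMap y0 y0 g A f = f := by
  apply Subtype.ext
  show (Finsupp.mapDomain g (f : Y →₀ A)).erase y0 = (f : Y →₀ A)
  rw [Finsupp.mapDomain_congr (g := id)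
    (fun x hx => hg x (Finsupp.mem_support_iff.1 hx)), Finsupp.mapDomain_id]
  ext a
  by_cases ha : a = y0
  · rw [ha, Finsupp.erase_same, smash_coe_apply_pt]
  · rw [Finsupp.erase_ne ha]

/-- Post-composition with a homomorphism `ψ : A →+ A`, as an endomorphism of `Y ∧ A`. -/
noncomputable def smashRange (y0 : Y) (ψ : A →+ A) : Smash Y y0 A →+ Smash Y y0 A where
  toFun f := ⟨Finsupp.mapRange ψ ψ.map_zero (f : Y →₀ A), by
    show Finsupp.mapRange ψ ψ.map_zero (f : Y →₀ A) y0 = 0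
    rw [Finsupp.mapRange_apply, smash_coe_apply_pt, ψ.map_zero]⟩
  map_zero' := Subtype.ext (by simp)
  map_add' f₁ f₂ := Subtype.ext (by
    show Finsupp.mapRange ψ ψ.map_zero ((f₁ : Y →₀ A) + (f₂ : Y →₀ A)) = _
    rw [Finsupp.mapRange_add ψ.map_add]
    rfl)

theorem smashRange_coe (y0 : Y) (ψ : A →+ A) (f : Smash Y y0 A) :
    ((smashRange y0 ψ f : Smash Y y0 A) : Y →₀ A)
      = Finsupp.mapRange ψ ψ.map_zero (f : Y →₀ A) := rfl

theorem smashMap_smashRange (y0 : Y) (z0 : Z) (g : Y → Z) (ψ : A →+ A) (f : Smash Y y0 A) :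
    smashMap y0 z0 g A (smashRange y0 ψ f) = smashRange z0 ψ (smashMap y0 z0 g A f) := by
  apply Subtype.ext
  show (Finsupp.mapDomain g (Finsupp.mapRange ψ ψ.map_zero (f : Y →₀ A))).erase z0
      = Finsupp.mapRange ψ ψ.map_zero ((Finsupp.mapDomain g (f : Y →₀ A)).erase z0)
  rw [Finsupp.mapDomain_mapRange _ _ _ _ ψ.map_add]
  ext a
  by_cases ha : a = z0
  · rw [ha, Finsupp.erase_same, Finsupp.mapRange_apply, Finsupp.erase_same, ψ.map_zero]
  · rw [Finsupp.erase_ne ha, Finsupp.mapRange_apply, Finsupp.mapRange_apply,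
      Finsupp.erase_ne ha]

theorem smash_coe_nsmul (y0 : Y) (n : ℕ) (f : Smash Y y0 A) :
    ((n • f : Smash Y y0 A) : Y →₀ A) = n • (f : Y →₀ A) := rfl

/-- Pointwise division of an `S`-valued element of `Y ∧ A` by `n`, inside `S`. -/
theorem smash_div (y0 : Y) (n : ℕ) (S : AddSubgroup A)
    (hdiv : ∀ a ∈ S, ∃ b ∈ S, n • b = a) (f : Smash Y y0 A)
    (hf : ∀ y, (f : Y →₀ A) y ∈ S) :
    ∃ k : Smash Y y0 A, (∀ y, (k : Y →₀ A) y ∈ S)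
      ∧ (∀ y, (k : Y →₀ A) y ≠ 0 → (f : Y →₀ A) y ≠ 0) ∧ n • k = f := by
  classical
  set c : A → A := fun a => if h : a ∈ S ∧ a ≠ 0 then (hdiv a h.1).choose else 0 with hc
  have hc0 : c 0 = 0 := by simp [hc]
  have hcS : ∀ a ∈ S, c a ∈ S := by
    intro a ha
    by_cases h : a ∈ S ∧ a ≠ 0
    · simp only [hc]; rw [dif_pos h]; exact (hdiv a h.1).choose_spec.1
    · simp only [hc]; rw [dif_neg h]; exact S.zero_mem
  have hcn : ∀ a ∈ S, n • c a = a := by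
    intro a ha
    by_cases h0 : a = 0
    · subst h0; rw [hc0, smul_zero]
    · have h : a ∈ S ∧ a ≠ 0 := ⟨ha, h0⟩
      simp only [hc]; rw [dif_pos h]; exact (hdiv a h.1).choose_spec.2
  have hcz : ∀ a, a = 0 → c a = 0 := fun a ha => by rw [ha, hc0]
  refine ⟨⟨Finsupp.mapRange c hc0 (f : Y →₀ A), by
      show Finsupp.mapRange c hc0 (f : Y →₀ A) y0 = 0
      rw [Finsupp.mapRange_apply, smash_coe_apply_pt, hc0]⟩, ?_, ?_, ?_⟩
  · intro y
    show Finsupp.mapRange c hc0 (f : Y →₀ A) y ∈ S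
    rw [Finsupp.mapRange_apply]
    exact hcS _ (hf y)
  · intro y hy h0
    apply hy
    show Finsupp.mapRange c hc0 (f : Y →₀ A) y = 0
    rw [Finsupp.mapRange_apply, hcz _ h0]
  · apply Subtype.ext
    rw [smash_coe_nsmul]
    ext y
    rw [Finsupp.smul_apply]
    show n • Finsupp.mapRange c hc0 (f : Y →₀ A) y = (f : Y →₀ A) y
    rw [Finsupp.mapRange_apply]
    exact hcn _ (hf y)

end AuxSmash

section Tower

open Opposite

variable (F : ℕᵒᵖ ⥤ Pointed.{w})

/-- The underlying set of the `t`-th stage of the tower. -/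
abbrev XX (t : ℕ) : Type w := (F.obj (op t)).X

/-- The basepoint of the `t`-th stage. -/
abbrev pp (t : ℕ) : XX F t := (F.obj (op t)).point

/-- The transition map `X s → X t` for `t ≤ s`. -/
def ff {t s : ℕ} (h : t ≤ s) : XX F s → XX F t := (F.map (homOfLE h).op).toFun

theorem ff_pt {t s : ℕ} (h : t ≤ s) : ff F h (pp F s) = pp F t :=
  (F.map (homOfLE h).op).map_point

theorem ff_comp {a b c : ℕ} (hab : a ≤ b) (hbc : b ≤ c) (x : XX F c) :
    ff F hab (ff F hbc x) = ff F (hab.trans hbc) x := by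
  have h1 : (homOfLE (hab.trans hbc)).op = (homOfLE hbc).op ≫ (homOfLE hab).op := by
    rw [← op_comp, homOfLE_comp]
  show (F.map (homOfLE hab).op).toFun ((F.map (homOfLE hbc).op).toFun x)
      = (F.map (homOfLE (hab.trans hbc)).op).toFun x
  rw [h1, F.map_comp]
  rfl

theorem ff_id (t : ℕ) (h : t ≤ t) (x : XX F t) : ff F h x = x := by
  have h1 : (homOfLE h).op = 𝟙 (op t) := by
    rw [show homOfLE h = 𝟙 t from Subsingleton.elim _ _]
    rfl
  show (F.map (homOfLE h).op).toFun x = x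
  rw [h1, F.map_id]
  rfl

variable {A : Type*} [AddCommGroup A]

theorem glim_compat {x : ∀ d : ℕᵒᵖ, Smash (F.obj d).X (F.obj d).point A}
    (hx : x ∈ glim F A) {t s : ℕ} (h : t ≤ s) :
    smashMap (pp F s) (pp F t) (ff F h) A (x (op s)) = x (op t) :=
  hx ((homOfLE h).op)

/-- The main Mittag-Leffler division lemma: if every element of `S` is divisible by `n`
within `S`, then every `S`-valued element of `glim F A` is divisible by `n` within the
`S`-valued elements. -/
theorem ml_div (hML : MittagLeffler F) (S : AddSubgroup A) (n : ℕ)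
    (hdiv : ∀ a ∈ S, ∃ b ∈ S, n • b = a)
    (x : ∀ d : ℕᵒᵖ, Smash (F.obj d).X (F.obj d).point A) (hx : x ∈ glim F A)
    (hval : ∀ (d : ℕᵒᵖ) (y : (F.obj d).X), (x d : _ →₀ A) y ∈ S) :
    ∃ g, ∃ _ : g ∈ glim F A, (∀ (d : ℕᵒᵖ) (y : (F.obj d).X), (g d : _ →₀ A) y ∈ S)
      ∧ n • g = x := by
  classical
  choose s0 hs0 hML' using hML
  -- a monotone choice of stabilization indices
  set sh : ℕ → ℕ := fun t => Nat.rec (s0 0) (fun t ih => max (s0 (t + 1)) (ih + 1)) t with hsh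
  have hsh0 : sh 0 = s0 0 := rfl
  have hshS : ∀ t, sh (t + 1) = max (s0 (t + 1)) (sh t + 1) := fun t => rfl
  have hsh_ge : ∀ t, s0 t ≤ sh t := by
    intro t
    cases t with
    | zero => exact le_of_eq hsh0.symm
    | succ t => rw [hshS]; exact le_max_left _ _
  have hsh_mono : ∀ t, sh t ≤ sh (t + 1) := by
    intro t
    rw [hshS]
    exact le_trans (Nat.le_succ _) (le_max_right _ _)
  have hsh_t : ∀ t, t ≤ sh t := fun t => le_trans (hs0 t) (hsh_ge t)
  -- stable ranges
  have hrange : ∀ (t r : ℕ) (h : sh t ≤ r),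
      Set.range (ff F (hsh_t t)) = Set.range (ff F ((hsh_t t).trans h)) := by
    intro t r h
    have e1 := hML' t (sh t) (hsh_ge t)
    have e2 := hML' t r (le_trans (hsh_ge t) h)
    exact e1.symm.trans e2
  set St : ∀ t : ℕ, Set (XX F t) := fun t => Set.range (ff F (hsh_t t)) with hSt
  have hF2 : ∀ t, ff F (Nat.le_succ t) '' St (t + 1) = St t := by
    intro t
    have : ff F (Nat.le_succ t) '' Set.range (ff F (hsh_t (t + 1)))
        = Set.range (ff F (Nat.le_succ t) ∘ ff F (hsh_t (t + 1))) := (Set.range_comp _ _).symm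
    rw [hSt, this]
    have hcomp : (ff F (Nat.le_succ t) ∘ ff F (hsh_t (t + 1)))
        = ff F ((Nat.le_succ t).trans (hsh_t (t + 1))) := funext fun y => ff_comp F _ _ y
    rw [hcomp]
    exact (hrange t (sh (t + 1)) (hsh_mono t)).symm
  have hF3 : ∀ t, pp F t ∈ St t := fun t => ⟨pp F (sh t), ff_pt F _⟩
  have hF4 : ∀ (z : ∀ d : ℕᵒᵖ, Smash (F.obj d).X (F.obj d).point A), z ∈ glim F A →
      ∀ (t : ℕ) (y : XX F t), (z (op t) : _ →₀ A) y ≠ 0 → y ∈ St t := by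
    intro z hz t y hy
    by_contra hy'
    rw [← glim_compat F hz (hsh_t t)] at hy
    by_cases hb : y = pp F t
    · exact hy' (hb ▸ hF3 t)
    · rw [smashMap_apply_ne _ _ _ _ hb] at hy
      exact hy (Finsupp.mapDomain_notin_range _ _ hy')
  -- a section of the transition maps on the stable subsets
  have hsec : ∀ (t : ℕ) (y : XX F t), y ∈ St t → y ≠ pp F t →
      ∃ y' : XX F (t + 1), y' ∈ St (t + 1) ∧ ff F (Nat.le_succ t) y' = y := by
    intro t y hy _
    rw [← hF2 t] at hy
    obtain ⟨y', hy', he⟩ := hy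
    exact ⟨y', hy', he⟩
  set σ : ∀ t : ℕ, XX F t → XX F (t + 1) := fun t y =>
    if h : y ∈ St t ∧ y ≠ pp F t then (hsec t y h.1 h.2).choose else pp F (t + 1) with hσ
  have hσ_pt : ∀ t, σ t (pp F t) = pp F (t + 1) := by
    intro t
    simp only [hσ]
    rw [dif_neg (by simp)]
  have hσ_mem : ∀ (t : ℕ) (y : XX F t), y ∈ St t → σ t y ∈ St (t + 1) := by
    intro t y hy
    by_cases hb : y = pp F t
    · rw [hb, hσ_pt]; exact hF3 (t + 1)
    · simp only [hσ]; rw [dif_pos ⟨hy, hb⟩]; exact (hsec t y hy hb).choose_spec.1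
  have hσ_sect : ∀ (t : ℕ) (y : XX F t), y ∈ St t → ff F (Nat.le_succ t) (σ t y) = y := by
    intro t y hy
    by_cases hb : y = pp F t
    · rw [hb, hσ_pt, ff_pt]
    · simp only [hσ]; rw [dif_pos ⟨hy, hb⟩]; exact (hsec t y hy hb).choose_spec.2
  -- the retraction identity
  have retract : ∀ (t : ℕ) (f : Smash (XX F t) (pp F t) A),
      (∀ y, (f : _ →₀ A) y ≠ 0 → y ∈ St t) →
      smashMap (pp F (t + 1)) (pp F t) (ff F (Nat.le_succ t)) A
        (smashMap (pp F t) (pp F (t + 1)) (σ t) A f) = f := by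
    intro t f hf
    rw [smashMap_comp _ _ _ _ _ (ff_pt F _) A f]
    exact smashMap_eq_self _ _ _ fun y hy => hσ_sect t y (hf y hy)
  -- the invariant
  set P : ∀ t : ℕ, Smash (XX F t) (pp F t) A → Prop := fun t gt =>
    n • gt = x (op t) ∧ (∀ y, (gt : XX F t →₀ A) y ≠ 0 → y ∈ St t)
      ∧ (∀ y, (gt : XX F t →₀ A) y ∈ S) with hP
  -- base case
  have base : ∃ g0, P 0 g0 := by
    obtain ⟨k, hkS, hksupp, hkn⟩ := smash_div (pp F 0) n S hdiv (x (op 0)) (hval (op 0))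
    exact ⟨k, hkn, fun y hy => hF4 x hx 0 y (hksupp y hy), hkS⟩
  -- inductive step
  have key : ∀ (t : ℕ) (gt : Smash (XX F t) (pp F t) A), P t gt →
      ∃ g' : Smash (XX F (t + 1)) (pp F (t + 1)) A, P (t + 1) g' ∧
        smashMap (pp F (t + 1)) (pp F t) (ff F (Nat.le_succ t)) A g' = gt := by
    intro t gt hgt
    obtain ⟨hgt1, hgt2, hgt3⟩ := hgt
    set φs := smashMap (pp F (t + 1)) (pp F t) (ff F (Nat.le_succ t)) A with hφs
    set σs := smashMap (pp F t) (pp F (t + 1)) (σ t) A with hσs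
    set xt1 := x (op (t + 1)) with hxt1
    set xt := x (op t) with hxt
    have hcompat : φs xt1 = xt := glim_compat F hx (Nat.le_succ t)
    have hxt_supp : ∀ y, (xt : XX F t →₀ A) y ≠ 0 → y ∈ St t := hF4 x hx t
    have hxt1_supp : ∀ y, (xt1 : XX F (t + 1) →₀ A) y ≠ 0 → y ∈ St (t + 1) := hF4 x hx (t + 1)
    set k := xt1 - σs xt with hk
    have hkS : ∀ y, (k : XX F (t + 1) →₀ A) y ∈ S := by
      intro y
      rw [hk]
      rw [show ((xt1 - σs xt : Smash (XX F (t + 1)) (pp F (t + 1)) A) : XX F (t + 1) →₀ A) y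
          = (xt1 : XX F (t + 1) →₀ A) y - ((σs xt : Smash (XX F (t + 1)) (pp F (t + 1)) A) : XX F (t + 1) →₀ A) y from rfl]
      exact S.sub_mem (hval _ y) (smashMap_mem _ _ _ _ S (hval _) y)
    have hksupp : ∀ y, (k : XX F (t + 1) →₀ A) y ≠ 0 → y ∈ St (t + 1) := by
      intro y hy
      by_contra hy'
      apply hy
      rw [hk, show ((xt1 - σs xt : Smash (XX F (t + 1)) (pp F (t + 1)) A) : XX F (t + 1) →₀ A) y
          = (xt1 : XX F (t + 1) →₀ A) y - ((σs xt : Smash (XX F (t + 1)) (pp F (t + 1)) A) : XX F (t + 1) →₀ A) y from rfl]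
      have h1 : (xt1 : XX F (t + 1) →₀ A) y = 0 := by
        by_contra h
        exact hy' (hxt1_supp y h)
      have h2 : ((σs xt : Smash (XX F (t + 1)) (pp F (t + 1)) A) : XX F (t + 1) →₀ A) y = 0 := by
        by_contra h
        obtain ⟨y', hy'', rfl⟩ := smashMap_supp _ _ _ _ (St t) hxt_supp y h
        exact hy' (hσ_mem t y' hy'')
      rw [h1, h2, sub_zero]
    obtain ⟨k'', hk''S, hk''supp0, hk''n⟩ := smash_div (pp F (t + 1)) n S hdiv k hkS
    have hk''supp : ∀ y, (k'' : XX F (t + 1) →₀ A) y ≠ 0 → y ∈ St (t + 1) :=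
      fun y hy => hksupp y (hk''supp0 y hy)
    have hφk''supp : ∀ y, ((φs k'' : Smash (XX F t) (pp F t) A) : XX F t →₀ A) y ≠ 0 → y ∈ St t := by
      intro y hy
      have := smashMap_supp _ _ _ _ (St (t + 1)) hk''supp y hy
      rw [hF2 t] at this
      exact this
    set g' := σs gt + k'' - σs (φs k'') with hg'
    have hsupp_σgt : ∀ y, ((σs gt : Smash (XX F (t + 1)) (pp F (t + 1)) A) : XX F (t + 1) →₀ A) y ≠ 0 → y ∈ St (t + 1) := by
      intro y hy
      obtain ⟨y', hy'', rfl⟩ := smashMap_supp _ _ _ _ (St t) hgt2 y hy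
      exact hσ_mem t y' hy''
    have hsupp_σφk : ∀ y, ((σs (φs k'') : Smash (XX F (t + 1)) (pp F (t + 1)) A) : XX F (t + 1) →₀ A) y ≠ 0 → y ∈ St (t + 1) := by
      intro y hy
      obtain ⟨y', hy'', rfl⟩ := smashMap_supp _ _ _ _ (St t) hφk''supp y hy
      exact hσ_mem t y' hy''
    have hval_coe : ∀ (a b c : Smash (XX F (t + 1)) (pp F (t + 1)) A) (y : XX F (t + 1)),
        ((a + b - c : Smash (XX F (t + 1)) (pp F (t + 1)) A) : XX F (t + 1) →₀ A) y
          = (a : XX F (t + 1) →₀ A) y + (b : XX F (t + 1) →₀ A) y - (c : XX F (t + 1) →₀ A) y := fun _ _ _ _ => rfl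
    refine ⟨g', ⟨?_, ?_, ?_⟩, ?_⟩
    · -- n • g' = x (op (t+1))
      have hφk : φs k = 0 := by
        rw [hk, map_sub, hcompat, retract t xt hxt_supp, sub_self]
      have : n • g' = σs (n • gt) + n • k'' - σs (φs (n • k'')) := by
        rw [hg']
        rw [smul_sub, smul_add, map_nsmul, map_nsmul, map_nsmul]
      rw [this, hgt1, hk''n, hφk, map_zero, sub_zero, hk]
      abel
    · -- support condition
      intro y hy
      rw [hg', hval_coe] at hy
      by_contra hy'
      have h1 : ((σs gt : Smash (XX F (t + 1)) (pp F (t + 1)) A) : XX F (t + 1) →₀ A) y = 0 := by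
        by_contra h; exact hy' (hsupp_σgt y h)
      have h2 : (k'' : XX F (t + 1) →₀ A) y = 0 := by
        by_contra h; exact hy' (hk''supp y h)
      have h3 : ((σs (φs k'') : Smash (XX F (t + 1)) (pp F (t + 1)) A) : XX F (t + 1) →₀ A) y = 0 := by
        by_contra h; exact hy' (hsupp_σφk y h)
      rw [h1, h2, h3] at hy
      simp at hy
    · -- values in S
      intro y
      rw [hg', hval_coe]
      exact S.sub_mem (S.add_mem (smashMap_mem _ _ _ _ S hgt3 y) (hk''S y))
        (smashMap_mem _ _ _ _ S (fun z => smashMap_mem _ _ _ _ S hk''S z) y)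
    · -- compatibility
      rw [hg', map_sub, map_add, retract t gt hgt2, retract t (φs k'') hφk''supp]
      abel
  -- build the sequence by recursion
  set G : ∀ t : ℕ, {gt : Smash (XX F t) (pp F t) A // P t gt} := fun t =>
    Nat.rec ⟨base.choose, base.choose_spec⟩
      (fun t ih => ⟨(key t ih.1 ih.2).choose, (key t ih.1 ih.2).choose_spec.1⟩) t with hG
  have hGcompat : ∀ t : ℕ,
      smashMap (pp F (t + 1)) (pp F t) (ff F (Nat.le_succ t)) A (G (t + 1)).1 = (G t).1 :=
    fun t => (key t (G t).1 (G t).2).choose_spec.2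
  have hGLE : ∀ (j t : ℕ),
      smashMap (pp F (t + j)) (pp F t) (ff F (Nat.le_add_right t j)) A (G (t + j)).1
        = (G t).1 := by
    intro j
    induction j with
    | zero =>
      intro t
      have : ff F (Nat.le_add_right t 0) = id := funext fun y => ff_id F t _ y
      rw [this]
      exact smashMap_eq_self _ _ _ fun y _ => rfl
    | succ j ih =>
      intro t
      have e1 : smashMap (pp F (t + j)) (pp F t) (ff F (Nat.le_add_right t j)) A
          (smashMap (pp F (t + j + 1)) (pp F (t + j)) (ff F (Nat.le_succ (t + j))) A
            (G (t + j + 1)).1)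
          = smashMap (pp F (t + (j + 1))) (pp F t) (ff F (Nat.le_add_right t (j + 1))) A
            (G (t + (j + 1))).1 := by
        rw [smashMap_comp _ _ _ _ _ (ff_pt F _) A]
        have : (ff F (Nat.le_add_right t j) ∘ ff F (Nat.le_succ (t + j)))
            = ff F (Nat.le_add_right t (j + 1)) := funext fun y => ff_comp F _ _ y
        rw [this]
        rfl
      rw [← e1, hGcompat, ih]
  refine ⟨fun d => (G d.unop).1, ?_, ?_, ?_⟩
  · intro d d' u
    have hle : d'.unop ≤ d.unop := leOfHom u.unop
    have hu : u = (homOfLE hle).op := by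
      rw [show homOfLE hle = u.unop from Subsingleton.elim _ _]
      rfl
    rw [hu]
    obtain ⟨j, hj⟩ := Nat.exists_eq_add_of_le hle
    have hd : d = op (d'.unop + j) := by
      rw [← hj]
    subst hd
    exact hGLE j d'.unop
  · intro d y
    exact (G d.unop).2.2.2 y
  · funext d
    exact (G d.unop).2.1

end Tower

section GlimVal

variable (F : ℕᵒᵖ ⥤ Pointed.{w}) {A : Type*} [AddCommGroup A]

/-- The value of an element of `glim F A` at a stage `d` and a point `y`. -/
noncomputable def gval (g : ↥(glim F A)) (d : ℕᵒᵖ) (y : (F.obj d).X) : A :=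
  (g.1 d : (F.obj d).X →₀ A) y

theorem gval_add (a b : ↥(glim F A)) (d : ℕᵒᵖ) (y : (F.obj d).X) :
    gval F (a + b) d y = gval F a d y + gval F b d y := rfl

theorem gval_zero (d : ℕᵒᵖ) (y : (F.obj d).X) : gval F (0 : ↥(glim F A)) d y = 0 := rfl

theorem gval_neg (a : ↥(glim F A)) (d : ℕᵒᵖ) (y : (F.obj d).X) :
    gval F (-a) d y = -gval F a d y := rfl

theorem gval_sub (a b : ↥(glim F A)) (d : ℕᵒᵖ) (y : (F.obj d).X) :
    gval F (a - b) d y = gval F a d y - gval F b d y := rfl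

theorem gval_nsmul (n : ℕ) (a : ↥(glim F A)) (d : ℕᵒᵖ) (y : (F.obj d).X) :
    gval F (n • a) d y = n • gval F a d y := rfl

/-- The subgroup of `glim F A` consisting of elements all of whose values lie in `S`. -/
noncomputable def gsub (S : AddSubgroup A) : AddSubgroup ↥(glim F A) where
  carrier := {g | ∀ (d : ℕᵒᵖ) (y : (F.obj d).X), gval F g d y ∈ S}
  add_mem' := by
    intro a b ha hb d y
    rw [gval_add]
    exact S.add_mem (ha d y) (hb d y)
  zero_mem' := by
    intro d y
    rw [gval_zero]
    exact S.zero_mem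
  neg_mem' := by
    intro a ha d y
    rw [gval_neg]
    exact S.neg_mem (ha d y)

theorem mem_gsub {S : AddSubgroup A} {g : ↥(glim F A)} :
    g ∈ gsub F S ↔ ∀ (d : ℕᵒᵖ) (y : (F.obj d).X), gval F g d y ∈ S := Iff.rfl

end GlimVal


/-- Let `A` be an abelian group and `F : ℕᵒᵖ ⥤ Set_*` a tower of pointed sets
satisfying the Mittag-Leffler condition.  Then: (1) if `A` is `p`-divisible for a
prime `p` then `G(X,A)` and `H(X,A)` are `p`-divisible; (2) if `A` is divisible then
`G(X,A)` and `H(X,A)` are divisible; (3) if `A` is almost divisible then `G(X,A)`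
and `H(X,A)` are almost divisible. -/
theorem stmt14 (F : ℕᵒᵖ ⥤ Pointed.{w}) {A : Type*} [AddCommGroup A]
    (hML : MittagLeffler F) :
    (∀ p : ℕ, p.Prime → (∀ a : A, ∃ b : A, p • b = a) →
      ((∀ g : glim F A, ∃ g' : glim F A, p • g' = g) ∧
        (∀ x : ↥(glim F A) ⧸ (rho F A).range, ∃ y, p • y = x))) ∧
    ((∀ n : ℕ, 1 ≤ n → ∀ a : A, ∃ b : A, n • b = a) →
      ((∀ n : ℕ, 1 ≤ n → ∀ g : glim F A, ∃ g' : glim F A, n • g' = g) ∧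
        (∀ n : ℕ, 1 ≤ n → ∀ x : ↥(glim F A) ⧸ (rho F A).range, ∃ y, n • y = x))) ∧
    (AlmostDivisible A →
      (AlmostDivisible (glim F A) ∧ AlmostDivisible (↥(glim F A) ⧸ (rho F A).range))) := by
  classical
  -- division within a value subgroup
  have div_glim : ∀ (S : AddSubgroup A) (n : ℕ), (∀ a ∈ S, ∃ b ∈ S, n • b = a) →
      ∀ g : ↥(glim F A), g ∈ gsub F S →
      ∃ g' : ↥(glim F A), g' ∈ gsub F S ∧ n • g' = g := by
    intro S n hdiv g hg
    obtain ⟨g', hg', hval, hsmul⟩ := ml_div F hML S n hdiv g.1 g.2 hg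
    exact ⟨⟨g', hg'⟩, hval, Subtype.ext hsmul⟩
  have div_glim_top : ∀ n : ℕ, (∀ a : A, ∃ b : A, n • b = a) →
      ∀ g : ↥(glim F A), ∃ g', n • g' = g := by
    intro n hA g
    obtain ⟨g', _, h⟩ := div_glim ⊤ n
      (fun a _ => (hA a).elim fun b hb => ⟨b, trivial, hb⟩) g (fun _ _ => trivial)
    exact ⟨g', h⟩
  have div_quot : ∀ n : ℕ, (∀ g : ↥(glim F A), ∃ g', n • g' = g) →
      ∀ x : ↥(glim F A) ⧸ (rho F A).range, ∃ y, n • y = x := by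
    intro n hG x
    obtain ⟨g, rfl⟩ := QuotientAddGroup.mk'_surjective (rho F A).range x
    obtain ⟨g', hg'⟩ := hG g
    exact ⟨QuotientAddGroup.mk' _ g', by rw [← map_nsmul, hg']⟩
  refine ⟨?_, ?_, ?_⟩
  · intro p _ hA
    exact ⟨div_glim_top p hA, div_quot p (div_glim_top p hA)⟩
  · intro hA
    exact ⟨fun n hn => div_glim_top n (hA n hn),
      fun n hn => div_quot n (div_glim_top n (hA n hn))⟩
  intro hAD
  obtain ⟨D, B, hDB, hDdiv, m, hm1, hmB⟩ := hAD
  -- the projections associated to the direct decomposition A = D ⊕ B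
  set D' := AddSubgroup.toIntSubmodule D with hD'
  set B' := AddSubgroup.toIntSubmodule B with hB'
  have hc' : IsCompl D' B' := AddSubgroup.toIntSubmodule.isCompl hDB
  set πD := D'.projectionOnto B' hc' with hπD
  set πB := B'.projectionOnto D' hc'.symm with hπB
  set ψD : A →+ A := (D'.subtype.comp πD).toAddMonoidHom with hψD
  set ψB : A →+ A := (B'.subtype.comp πB).toAddMonoidHom with hψB
  have hψsum : ∀ a : A, ψD a + ψB a = a := fun a =>
    Submodule.projection_add_projection_eq_self hc' a
  have hψD_mem : ∀ a : A, ψD a ∈ D := fun a => (πD a).2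
  have hψB_mem : ∀ a : A, ψB a ∈ B := fun a => (πB a).2
  have hψD_left : ∀ a ∈ D, ψD a = a := by
    intro a ha
    exact congrArg Subtype.val (Submodule.projectionOnto_apply_left hc' ⟨a, ha⟩)
  have hψD_zero : ∀ a ∈ B, ψD a = 0 := by
    intro a ha
    have h0 := Submodule.projectionOnto_apply_of_mem_right hc' ha
    show ((πD a : D') : A) = 0
    rw [h0]
    rfl
  have hψB_left : ∀ a ∈ B, ψB a = a := by
    intro a ha
    exact congrArg Subtype.val (Submodule.projectionOnto_apply_left hc'.symm ⟨a, ha⟩)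
  have hψB_zero : ∀ a ∈ D, ψB a = 0 := by
    intro a ha
    have h0 := Submodule.projectionOnto_apply_of_mem_right hc'.symm ha
    show ((πB a : B') : A) = 0
    rw [h0]
    rfl
  -- lifting endomorphisms of A to endomorphisms of glim F A
  set L : (A →+ A) → ↥(glim F A) → ↥(glim F A) := fun ψ g =>
    ⟨fun d => smashRange (F.obj d).point ψ (g.1 d), by
      intro d d' u
      rw [smashMap_smashRange, g.2 u]⟩ with hL
  have hL_val : ∀ (ψ : A →+ A) (g : ↥(glim F A)) (d : ℕᵒᵖ) (y : (F.obj d).X),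
      gval F (L ψ g) d y = ψ (gval F g d y) := by
    intro ψ g d y
    show Finsupp.mapRange ψ ψ.map_zero (g.1 d : (F.obj d).X →₀ A) y = _
    rw [Finsupp.mapRange_apply]
    rfl
  have hL_rho : ∀ (ψ : A →+ A) (f : Smash (plim F) (plimPt F) A),
      L ψ (rho F A f) = rho F A (smashRange (plimPt F) ψ f) := by
    intro ψ f
    apply Subtype.ext
    funext d
    show smashRange (F.obj d).point ψ
        (smashMap (plimPt F) (F.obj d).point (fun x => x.1 d) A f)
      = smashMap (plimPt F) (F.obj d).point (fun x => x.1 d) A (smashRange (plimPt F) ψ f)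
    rw [smashMap_smashRange]
  -- the internal decomposition of glim F A
  set GD : AddSubgroup ↥(glim F A) := gsub F D with hGD
  set GB : AddSubgroup ↥(glim F A) := gsub F B with hGB
  have hdisj : Disjoint GD GB := by
    rw [AddSubgroup.disjoint_def]
    intro x hxD hxB
    have hv : ∀ (d : ℕᵒᵖ) (y : (F.obj d).X), gval F x d y = 0 := by
      intro d y
      exact (AddSubgroup.disjoint_def.1 hDB.disjoint) (hxD d y) (hxB d y)
    apply Subtype.ext
    funext d
    apply Subtype.ext
    ext y
    exact hv d y
  have hsum_eq : ∀ x : ↥(glim F A), L ψD x + L ψB x = x := by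
    intro x
    apply Subtype.ext
    funext d
    apply Subtype.ext
    ext y
    show gval F (L ψD x + L ψB x) d y = gval F x d y
    rw [gval_add, hL_val, hL_val, hψsum]
  have hcodisj : Codisjoint GD GB := by
    rw [codisjoint_iff, AddSubgroup.eq_top_iff']
    intro x
    refine AddSubgroup.mem_sup.2 ⟨L ψD x, ?_, L ψB x, ?_, hsum_eq x⟩
    · intro d y
      rw [hL_val]
      exact hψD_mem _
    · intro d y
      rw [hL_val]
      exact hψB_mem _
  have hGDdiv : DivisibleSubgroup GD := by
    intro n hn x hx
    obtain ⟨g', hg', hsmul⟩ := div_glim D n (hDdiv n hn) x hx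
    exact ⟨g', hg', hsmul⟩
  have hGBbdd : ∀ x ∈ GB, m • x = 0 := by
    intro x hx
    apply Subtype.ext
    funext d
    apply Subtype.ext
    ext y
    show gval F (m • x) d y = gval F (0 : ↥(glim F A)) d y
    rw [gval_nsmul, gval_zero]
    exact hmB _ (hx d y)
  constructor
  · exact ⟨GD, GB, ⟨hdisj, hcodisj⟩, hGDdiv, m, hm1, hGBbdd⟩
  -- the quotient
  set R := (rho F A).range with hR
  set mk := QuotientAddGroup.mk' R with hmk
  have hmk_surj : Function.Surjective mk := QuotientAddGroup.mk'_surjective R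
  refine ⟨GD.map mk, GB.map mk, ⟨?_, ?_⟩, ?_, m, hm1, ?_⟩
  · -- disjoint
    rw [AddSubgroup.disjoint_def]
    intro x hxD hxB
    obtain ⟨g1, hg1, hx1⟩ := AddSubgroup.mem_map.1 hxD
    obtain ⟨g2, hg2, hx2⟩ := AddSubgroup.mem_map.1 hxB
    have hz : mk (g1 - g2) = 0 := by rw [map_sub, hx1, hx2, sub_self]
    have hmem : g1 - g2 ∈ R := by
      rwa [QuotientAddGroup.mk'_apply, QuotientAddGroup.eq_zero_iff] at hz
    obtain ⟨f, hf⟩ := AddMonoidHom.mem_range.1 hmem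
    have e1 : L ψD (g1 - g2) = g1 := by
      apply Subtype.ext
      funext d
      apply Subtype.ext
      ext y
      show gval F (L ψD (g1 - g2)) d y = gval F g1 d y
      rw [hL_val, gval_sub, map_sub, hψD_left _ (hg1 d y), hψD_zero _ (hg2 d y), sub_zero]
    have e2 : L ψD (g1 - g2) ∈ R := by
      rw [← hf, hL_rho]
      exact ⟨_, rfl⟩
    rw [e1] at e2
    rw [← hx1, hmk, QuotientAddGroup.mk'_apply, QuotientAddGroup.eq_zero_iff]
    exact e2
  · -- codisjoint
    rw [codisjoint_iff, ← AddSubgroup.map_sup, codisjoint_iff.1 hcodisj]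
    exact AddSubgroup.map_top_of_surjective mk hmk_surj
  · -- divisible
    intro n hn x hx
    obtain ⟨g, hg, rfl⟩ := AddSubgroup.mem_map.1 hx
    obtain ⟨g', hg', hsmul⟩ := div_glim D n (hDdiv n hn) g hg
    refine ⟨mk g', AddSubgroup.mem_map.2 ⟨g', hg', rfl⟩, ?_⟩
    rw [← map_nsmul, hsmul]
  · -- bounded
    intro x hx
    obtain ⟨g, hg, rfl⟩ := AddSubgroup.mem_map.1 hx
    rw [← map_nsmul, hGBbdd g hg, map_zero]
end

section
/- Let A be an abelian group that is not almost divisible. Then there exists a directed poset 𝒯 with |𝒯| = 2^ℵ₀ and a diagram X : 𝒯 → Set_* of pointed sets whose structure maps φ_{t,s} : X(t) → X(s) are all surjective (in particular, X satisfies the Mittag-Leffler condition), such that the cokernel H(X,A) of the natural map ρ is not cotorsion. -/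
open CategoryTheory Finsupp

universe u v w

/-- `C` is cotorsion, i.e. `Ext¹_ℤ(ℚ, C) = 0`.  Applying `Hom(-, C)` to the standard
free presentation `0 → ⊕_{n ∈ ℕ} ℤ → ⊕_{n ∈ ℕ} ℤ → ℚ → 0` (where the first map sends
`e_n ↦ e_n - (n+1)·e_{n+1}`) identifies `Ext¹_ℤ(ℚ, C)` with the cokernel of
`C^ℕ → C^ℕ, (x_n) ↦ (x_n - (n+1)x_{n+1})`; hence `Ext¹_ℤ(ℚ, C) = 0` iff every system
of equations `x_n - (n+1)·x_{n+1} = a_n` (`n ∈ ℕ`) is solvable in `C`. -/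
def Cotorsion (C : Type*) [AddCommGroup C] : Prop :=
  ∀ a : ℕ → C, ∃ x : ℕ → C, ∀ n : ℕ, x n - (n + 1) • x (n + 1) = a n
/-- A diagram of pointed sets indexed by a (nonempty) directed poset `T`, i.e. a
functor `Tᵒᵖ ⥤ Set_*` (with structure maps `X(t) → X(s)` for `t ≥ s`). -/
structure DirectedDiagram : Type (u + 1) where
  T : Type u
  [po : PartialOrder T]
  [dir : IsDirected T (· ≤ ·)]
  [ne : Nonempty T]
  F : Tᵒᵖ ⥤ Pointed.{u}

attribute [instance] DirectedDiagram.po DirectedDiagram.dir DirectedDiagram.ne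
-- ### Auxiliary constructions ### --

section evallemmas
variable {Y : Type u} {Z : Type v} (y0 : Y) (z0 : Z) (g : Y → Z)
  (A : Type w) [AddCommGroup A] (f : Smash Y y0 A)

lemma smashMap_apply_fiber {z : Z} (hz : z ≠ z0) {y1 : Y} (hy1 : g y1 = z)
    (huniq : ∀ y, g y = z → y = y1) :
    ((smashMap y0 z0 g A f).1 : Z →₀ A) z = f.1 y1 := by
  classical
  show ((Finsupp.mapDomain g f.1).erase z0) z = f.1 y1
  rw [Finsupp.erase_ne hz, Finsupp.mapDomain, Finsupp.sum_apply]
  rw [Finsupp.sum, Finset.sum_eq_single y1]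
  · rw [Finsupp.single_apply, if_pos hy1]
  · intro b _ hb
    rw [Finsupp.single_apply, if_neg (fun h => hb (huniq b h))]
  · intro hy
    rw [Finsupp.single_apply, if_pos hy1, Finsupp.notMem_support_iff.1 hy]

lemma smashMap_apply_empty {z : Z} (hz : z ≠ z0) (hno : ∀ y, g y ≠ z) :
    ((smashMap y0 z0 g A f).1 : Z →₀ A) z = 0 := by
  show ((Finsupp.mapDomain g f.1).erase z0) z = 0
  rw [Finsupp.erase_ne hz, Finsupp.mapDomain_notin_range]
  rintro ⟨y, hy⟩
  exact hno y hy
end evallemmas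

/-- the index poset, a copy of `ℕ → ℕ` without its pi-category instance -/
def TT : Type := ℕ → ℕ

instance : SemilatticeSup TT := inferInstanceAs (SemilatticeSup (ℕ → ℕ))
instance : Nonempty TT := ⟨(fun _ => 0 : ℕ → ℕ)⟩

/-- application of an element of `TT` -/
def TT.app (t : TT) : ℕ → ℕ := t

lemma TT.app_le {s t : TT} (h : s ≤ t) (n : ℕ) : s.app n ≤ t.app n := h n

lemma TT.le_app_sup_left (s t : TT) (n : ℕ) : s.app n ≤ (s ⊔ t).app n :=
  TT.app_le le_sup_left n

lemma TT.le_app_sup_right (s t : TT) (n : ℕ) : t.app n ≤ (s ⊔ t).app n :=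
  TT.app_le le_sup_right n

/-- carrier of the diagram at `f` -/
abbrev PC (f : TT) : Type := Option {p : ℕ × ℕ // p.2 < f.app p.1}

def stepMap {f g : TT} (_hgf : g ≤ f) : PC f → PC g :=
  fun z => z.bind (fun p => if h : p.1.2 < g.app p.1.1 then some ⟨p.1, h⟩ else none)

lemma stepMap_some {f g : TT} (hgf : g ≤ f) {p : ℕ × ℕ} (hf : p.2 < f.app p.1)
    (hg : p.2 < g.app p.1) : stepMap hgf (some ⟨p, hf⟩) = some ⟨p, hg⟩ := by
  simp [stepMap, hg]

lemma stepMap_none {f g : TT} (hgf : g ≤ f) : stepMap hgf (none : PC f) = none := rfl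

lemma stepMap_fiber {f g : TT} (hgf : g ≤ f) {p : ℕ × ℕ} (hg : p.2 < g.app p.1)
    (z : PC f) (hz : stepMap hgf z = some ⟨p, hg⟩) :
    z = some ⟨p, lt_of_lt_of_le hg (hgf p.1 : _)⟩ := by
  match z with
  | Option.none => exact absurd hz (by simp [stepMap])
  | Option.some ⟨q, hq⟩ =>
    by_cases h : q.2 < g.app q.1
    · simp only [stepMap, Option.bind, dif_pos h] at hz
      obtain ⟨h1⟩ := Option.some_inj.1 hz
      rfl
    · simp [stepMap, Option.bind, dif_neg h] at hz

lemma stepMap_surj {f g : TT} (hgf : g ≤ f) : Function.Surjective (stepMap hgf) := by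
  rintro (_ | ⟨p, hp⟩)
  · exact ⟨none, rfl⟩
  · exact ⟨some ⟨p, lt_of_lt_of_le hp (hgf p.1 : _)⟩, stepMap_some hgf _ hp⟩

noncomputable def Fdiag : TTᵒᵖ ⥤ Pointed.{0} where
  obj d := Pointed.mk (PC d.unop) none
  map {d d'} u := ⟨stepMap (leOfHom u.unop), rfl⟩
  map_id d := by
    apply Pointed.Hom.ext
    funext z
    match z with
    | Option.none => rfl
    | Option.some ⟨p, hp⟩ => exact stepMap_some le_rfl hp hp
  map_comp {d d' d''} u v := by
    apply Pointed.Hom.ext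
    funext z
    have h1 : Opposite.unop d' ≤ Opposite.unop d := leOfHom u.unop
    have h2 : Opposite.unop d'' ≤ Opposite.unop d' := leOfHom v.unop
    show stepMap (h2.trans h1) z = stepMap h2 (stepMap h1 z)
    match z with
    | Option.none => rfl
    | Option.some ⟨p, hp⟩ =>
      by_cases h : p.2 < (Opposite.unop d'').app p.1
      · rw [stepMap_some (h2.trans h1) hp h,
          stepMap_some h1 hp (lt_of_lt_of_le h (h2 p.1 : _)),
          stepMap_some h2 _ h]
      · have hx : stepMap (h2.trans h1) (Option.some ⟨p, hp⟩) = none := by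
          simp [stepMap, h]
        rw [hx]
        by_cases hy : p.2 < (Opposite.unop d').app p.1
        · rw [stepMap_some h1 hp hy]
          simp [stepMap, h]
        · rw [show stepMap h1 (Option.some ⟨p, hp⟩) = none by simp [stepMap, hy]]
          rfl

section keylemmas
variable {A : Type} [AddCommGroup A]

/-- constant element of `TT` -/
def cst (m : ℕ) : TT := (fun _ => m : ℕ → ℕ)

lemma cst_app (m k : ℕ) : (cst m).app k = m := rfl

/-- value coherence for elements of `glim Fdiag A` (directed version). -/
lemma glim_coherence_le {h : ∀ d : TTᵒᵖ, Smash (Fdiag.obj d).X (Fdiag.obj d).point A}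
    (hh : h ∈ glim Fdiag A) {f g : TT} (hgf : g ≤ f) {p : ℕ × ℕ}
    (hf : p.2 < f.app p.1) (hg : p.2 < g.app p.1) :
    ((h (Opposite.op g)).1 : PC g →₀ A) (Option.some ⟨p, hg⟩)
      = ((h (Opposite.op f)).1 : PC f →₀ A) (Option.some ⟨p, hf⟩) := by
  have hcomp := hh ((homOfLE hgf).op : Opposite.op f ⟶ Opposite.op g)
  rw [← hcomp]
  refine smashMap_apply_fiber _ _ _ A _ (Option.some_ne_none _) (stepMap_some hgf hf hg) ?_
  intro y hy
  exact stepMap_fiber hgf hg y hy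

lemma glim_coherence {h : ∀ d : TTᵒᵖ, Smash (Fdiag.obj d).X (Fdiag.obj d).point A}
    (hh : h ∈ glim Fdiag A) (f g : TT) {p : ℕ × ℕ}
    (hf : p.2 < f.app p.1) (hg : p.2 < g.app p.1) :
    ((h (Opposite.op f)).1 : PC f →₀ A) (Option.some ⟨p, hf⟩)
      = ((h (Opposite.op g)).1 : PC g →₀ A) (Option.some ⟨p, hg⟩) := by
  have h1 := glim_coherence_le hh (le_sup_left : f ≤ f ⊔ g) (lt_of_lt_of_le hf (TT.le_app_sup_left f g p.1)) hf
  have h2 := glim_coherence_le hh (le_sup_right : g ≤ f ⊔ g) (lt_of_lt_of_le hf (TT.le_app_sup_left f g p.1)) hg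
  exact h1.trans h2.symm

/-- thread coherence for elements of `plim Fdiag`. -/
lemma plim_coherence {x : ∀ d : TTᵒᵖ, (Fdiag.obj d).X} (hx : x ∈ plim Fdiag)
    {f g : TT} {p q : ℕ × ℕ} {hf : p.2 < f.app p.1} {hg : q.2 < g.app q.1}
    (h1 : x (Opposite.op f) = Option.some ⟨p, hf⟩)
    (h2 : x (Opposite.op g) = Option.some ⟨q, hg⟩) : p = q := by
  have hu1 := hx ((homOfLE (le_sup_left : f ≤ f ⊔ g)).op : Opposite.op (f ⊔ g) ⟶ Opposite.op f)
  have hu2 := hx ((homOfLE (le_sup_right : g ≤ f ⊔ g)).op : Opposite.op (f ⊔ g) ⟶ Opposite.op g)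
  rw [h1] at hu1
  rw [h2] at hu2
  have e1 := stepMap_fiber (le_sup_left : f ≤ f ⊔ g) hf _ hu1
  have e2 := stepMap_fiber (le_sup_right : g ≤ f ⊔ g) hg _ hu2
  rw [e1] at e2
  have := Option.some_inj.1 e2
  exact congrArg Subtype.val this
end keylemmas

section colsection
variable (A : Type) [AddCommGroup A]

/-- the `n`-th column of an element of `glim Fdiag A`, as a function `ℕ → A`. -/
noncomputable def colHom (n : ℕ) : (glim Fdiag A) →+ (ℕ → A) where
  toFun h := fun k => ((h.1 (Opposite.op (cst (k+1)))).1 : PC (cst (k+1)) →₀ A)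
      (Option.some ⟨(n, k), Nat.lt_succ_self k⟩)
  map_zero' := by funext k; rfl
  map_add' h h' := by
    funext k
    show ((((h + h').1 : ∀ d : TTᵒᵖ, Smash _ _ A) (Opposite.op (cst (k+1)))).1 : _ →₀ A) _ = _
    rw [AddSubgroup.coe_add, Pi.add_apply, AddSubgroup.coe_add]
    rfl

/-- the subgroup of finitely-supported functions `ℕ → A`. -/
def finSupp : AddSubgroup (ℕ → A) where
  carrier := {v | (Function.support v).Finite}
  add_mem' := by
    intro a b ha hb
    exact Set.Finite.subset (ha.union hb) (Function.support_add a b)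
  zero_mem' := by simp [Function.support_zero]
  neg_mem' := by
    intro a ha
    simpa [Function.support_neg] using ha

variable {A}

lemma smashMap_apply_ne_zero {Y : Type u} {Z : Type v} (y0 : Y) (z0 : Z) (g : Y → Z)
    (f : Smash Y y0 A) {z : Z} (hz : z ≠ z0)
    (h : ((smashMap y0 z0 g A f).1 : Z →₀ A) z ≠ 0) :
    ∃ y ∈ f.1.support, g y = z := by
  classical
  by_contra hcon
  push_neg at hcon
  apply h
  show ((Finsupp.mapDomain g f.1).erase z0) z = 0
  rw [Finsupp.erase_ne hz, Finsupp.mapDomain, Finsupp.sum_apply, Finsupp.sum]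
  apply Finset.sum_eq_zero
  intro y hy
  rw [Finsupp.single_apply, if_neg (hcon y hy)]

/-- columns of elements in the range of `rho` are finitely supported. -/
lemma col_rho_finSupp (n : ℕ) (f : Smash (plim Fdiag) (plimPt Fdiag) A) :
    colHom A n (rho Fdiag A f) ∈ finSupp A := by
  classical
  set v := colHom A n (rho Fdiag A f) with hv
  have hchoice : ∀ k, v k ≠ 0 → ∃ y : plim Fdiag, y ∈ f.1.support ∧
      y.1 (Opposite.op (cst (k+1))) = Option.some ⟨(n, k), Nat.lt_succ_self k⟩ := by
    intro k hk
    obtain ⟨y, hy1, hy2⟩ := smashMap_apply_ne_zero (plimPt Fdiag) _ _ f (Option.some_ne_none _) hk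
    exact ⟨y, hy1, hy2⟩
  let φ : ℕ → plim Fdiag := fun k =>
    if hk : v k ≠ 0 then (hchoice k hk).choose else plimPt Fdiag
  have himg : (φ '' Function.support v) ⊆ (f.1.support : Set (plim Fdiag)) := by
    rintro y ⟨k, hk, rfl⟩
    have hk' : v k ≠ 0 := hk
    simp only [φ, dif_pos hk']
    exact (hchoice k hk').choose_spec.1
  have hinj : Set.InjOn φ (Function.support v) := by
    intro k hk k' hk' he
    have hk0 : v k ≠ 0 := hk
    have hk'0 : v k' ≠ 0 := hk'
    have h1 := (hchoice k hk0).choose_spec.2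
    have h2 := (hchoice k' hk'0).choose_spec.2
    simp only [φ] at he
    rw [dif_pos hk0, dif_pos hk'0] at he
    rw [he] at h1
    have hpq := plim_coherence ((hchoice k' hk'0).choose).2 h1 h2
    exact congrArg Prod.snd hpq
  exact Set.Finite.of_finite_image (Set.Finite.subset (f.1.support.finite_toSet) himg) hinj
end colsection

section badcol
variable {A : Type} [AddCommGroup A]

/-- every element of `glim Fdiag A` has only finitely many columns with infinite support. -/
lemma col_bad_finite (h : glim Fdiag A) :
    {n : ℕ | (Function.support (colHom A n h)).Infinite}.Finite := by
  classical
  by_contra hbad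
  set I := {n : ℕ | (Function.support (colHom A n h)).Infinite} with hI
  have hne : ∀ n ∈ I, ∃ k, colHom A n h k ≠ 0 := by
    intro n hn
    obtain ⟨k, hk⟩ := (hn : (Function.support (colHom A n h)).Infinite).nonempty
    exact ⟨k, hk⟩
  let κ : ∀ n, n ∈ I → ℕ := fun n hn => (hne n hn).choose
  let f : TT := (fun n => if hn : n ∈ I then κ n hn + 1 else 0 : ℕ → ℕ)
  have happ : ∀ n (hn : n ∈ I), f.app n = κ n hn + 1 := by
    intro n hn
    show (if hn : n ∈ I then κ n hn + 1 else 0) = κ n hn + 1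
    rw [dif_pos hn]
  let F0 : PC f →₀ A := (h.1 (Opposite.op f)).1
  have hmem : ∀ n (hn : n ∈ I),
      (Option.some ⟨(n, κ n hn), by rw [happ n hn]; exact Nat.lt_succ_self _⟩ : PC f)
        ∈ F0.support := by
    intro n hn
    rw [Finsupp.mem_support_iff]
    have hco := glim_coherence (A := A) h.2 f (cst (κ n hn + 1))
      (p := (n, κ n hn)) (by rw [happ n hn]; exact Nat.lt_succ_self _) (Nat.lt_succ_self _)
    exact fun h0 => (hne n hn).choose_spec (hco.symm.trans h0)
  let ext : PC f → ℕ := fun z => match z with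
    | Option.some p => p.1.1
    | Option.none => 0
  have hsub : I ⊆ insert 0 (ext '' (F0.support : Set (PC f))) := by
    intro n hn
    exact Set.mem_insert_iff.2 (Or.inr ⟨_, hmem n hn, rfl⟩)
  exact hbad (Set.Finite.subset (Set.Finite.insert 0
    (Set.Finite.image ext (Finset.finite_toSet _))) hsub)
end badcol

section aelt
variable {A : Type} [AddCommGroup A]

/-- the basic column element: value `c` on the whole `n`-th column. -/
noncomputable def colFinsupp (f : TT) (n : ℕ) (c : A) : PC f →₀ A :=
  Finsupp.onFinset
    ((Finset.range (f.app n)).attach.image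
      (fun k => (Option.some ⟨(n, k.1), by simpa using Finset.mem_range.1 k.2⟩ : PC f)))
    (fun z => match z with
      | Option.some p => if p.1.1 = n then c else 0
      | Option.none => 0)
    (by
      intro z hz
      match z with
      | Option.none => exact absurd rfl hz
      | Option.some ⟨p, hp⟩ =>
        simp only [ne_eq] at hz
        by_cases hn : p.1 = n
        · subst hn
          refine Finset.mem_image.2 ⟨⟨p.2, Finset.mem_range.2 hp⟩, Finset.mem_attach _ _, rfl⟩
        · exact absurd (if_neg hn) hz)

lemma colFinsupp_some (f : TT) (n : ℕ) (c : A) {p : ℕ × ℕ} (hp : p.2 < f.app p.1) :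
    colFinsupp f n c (Option.some ⟨p, hp⟩) = if p.1 = n then c else 0 := rfl

lemma colFinsupp_none (f : TT) (n : ℕ) (c : A) :
    colFinsupp f n c (Option.none : PC f) = 0 := rfl

/-- the element of `glim Fdiag A` that is `c` on the entire `n`-th column. -/
noncomputable def aElt (n : ℕ) (c : A) : glim Fdiag A := by
  refine ⟨fun d => ⟨colFinsupp d.unop n c, colFinsupp_none _ _ _⟩, ?_⟩
  intro d d' u
  have h1 : d'.unop ≤ d.unop := leOfHom u.unop
  apply Subtype.ext
  apply Finsupp.ext
  intro z
  match z with
  | Option.none =>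
    exact Finsupp.erase_same
  | Option.some ⟨p, hp⟩ =>
    have hval := smashMap_apply_fiber (Option.none : PC d.unop) (Option.none : PC d'.unop)
      (stepMap h1) A ⟨colFinsupp d.unop n c, colFinsupp_none _ _ _⟩
      (Option.some_ne_none _) (stepMap_some h1 (lt_of_lt_of_le hp (h1 p.1 : _)) hp)
      (fun y hy => stepMap_fiber h1 hp y hy)
    exact hval.trans rfl

lemma colHom_aElt (m n : ℕ) (c : A) (k : ℕ) :
    colHom A m (aElt n c) k = if n = m then c else 0 := by
  show colFinsupp (cst (k+1)) n c (Option.some ⟨(m, k), Nat.lt_succ_self k⟩) = _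
  show (if m = n then c else 0) = _
  by_cases h : m = n
  · subst h; simp
  · rw [if_neg h, if_neg (fun hh => h hh.symm)]
end aelt



-- (Cotorsion above)


lemma not_cotorsion_of {C G : Type*} [AddCommGroup C] [AddCommGroup G]
    (π : ℕ → (C →+ G)) (a : ℕ → C) (g : ℕ → G)
    (hfin : ∀ x : C, {n : ℕ | π n x ≠ 0}.Finite)
    (hdiag : ∀ m n : ℕ, m ≠ n → π n (a m) = 0)
    (hgn : ∀ n, π n (a n) = g n)
    (hnd : ∀ n, ∃ N, n < N ∧ ∀ y : G, N.factorial • y ≠ n.factorial • g n) :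
    ¬ Cotorsion C := by
  intro hcot
  obtain ⟨x, hx⟩ := hcot a
  have key : ∀ N : ℕ,
      x 0 = (∑ m ∈ Finset.range N, m.factorial • a m) + N.factorial • x N := by
    intro N
    induction N with
    | zero => simp
    | succ N ih =>
      rw [Finset.sum_range_succ, ih]
      have h1 : x N = a N + (N + 1) • x (N + 1) := by
        have := hx N; rw [← this]; abel
      rw [h1, smul_add, Nat.factorial_succ, smul_smul, mul_comm (N+1) N.factorial]
      abel
  obtain ⟨n, hn⟩ := ((hfin (x 0)).infinite_compl).nonempty
  simp only [Set.mem_compl_iff, Set.mem_setOf_eq, not_not] at hn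
  obtain ⟨N, hNn, hval⟩ := hnd n
  have h2 := congrArg (π n) (key N)
  rw [hn, map_add, map_nsmul, map_sum] at h2
  have h3 : (∑ m ∈ Finset.range N, π n (m.factorial • a m)) = n.factorial • g n := by
    rw [Finset.sum_eq_single n]
    · rw [map_nsmul, hgn]
    · intro m _ hm
      rw [map_nsmul, hdiag m n hm, smul_zero]
    · intro hnN
      exact absurd (Finset.mem_range.2 hNn) hnN
  rw [h3] at h2
  have h4 : N.factorial • (- π n (x N)) = n.factorial • g n := by
    rw [smul_neg, neg_eq_iff_add_eq_zero, add_comm]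
    exact h2.symm
  exact hval _ h4


section final
variable {A : Type} [AddCommGroup A]

noncomputable def piBar (A : Type) [AddCommGroup A] (n : ℕ) :
    (↥(glim Fdiag A) ⧸ (rho Fdiag A).range) →+ ((ℕ → A) ⧸ finSupp A) :=
  QuotientAddGroup.lift (rho Fdiag A).range
    ((QuotientAddGroup.mk' (finSupp A)).comp (colHom A n))
    (by
      rintro _ ⟨f, rfl⟩
      show QuotientAddGroup.mk' (finSupp A) (colHom A n ((rho Fdiag A) f)) = 0
      rw [QuotientAddGroup.mk'_apply, QuotientAddGroup.eq_zero_iff]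
      exact col_rho_finSupp n f)

lemma piBar_mk (n : ℕ) (h : glim Fdiag A) :
    piBar A n (QuotientAddGroup.mk h) = QuotientAddGroup.mk' (finSupp A) (colHom A n h) := rfl

lemma main_not_cotorsion
    (c : ℕ → A) (N : ℕ → ℕ) (hlt : ∀ n, n < N n)
    (hval : ∀ n (y : A), (N n).factorial • y ≠ n.factorial • c n) :
    ¬ Cotorsion (↥(glim Fdiag A) ⧸ (rho Fdiag A).range) := by
  classical
  intro hcot
  -- data for the abstract criterion
  set G := (ℕ → A) ⧸ finSupp A with hG
  set a : ℕ → (↥(glim Fdiag A) ⧸ (rho Fdiag A).range) :=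
    fun n => QuotientAddGroup.mk (aElt n (c n)) with ha
  set g : ℕ → G := fun n => QuotientAddGroup.mk' (finSupp A) (fun _ => c n) with hg
  refine not_cotorsion_of (piBar A) a g ?_ ?_ ?_ ?_ hcot
  · -- finiteness
    intro x
    refine QuotientAddGroup.induction_on x ?_
    intro h
    have hsub : {n : ℕ | piBar A n (QuotientAddGroup.mk h) ≠ 0}
        ⊆ {n : ℕ | (Function.support (colHom A n h)).Infinite} := by
      intro n hn
      simp only [Set.mem_setOf_eq, piBar_mk] at hn ⊢
      intro hfin
      apply hn
      rw [QuotientAddGroup.mk'_apply, QuotientAddGroup.eq_zero_iff]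
      exact hfin
    exact Set.Finite.subset (col_bad_finite h) hsub
  · -- diagonal
    intro m n hmn
    rw [ha, piBar_mk, QuotientAddGroup.mk'_apply, QuotientAddGroup.eq_zero_iff]
    have : colHom A n (aElt m (c m)) = (fun _ => 0 : ℕ → A) := by
      funext k
      rw [colHom_aElt, if_neg hmn]
    rw [this]
    exact (finSupp A).zero_mem
  · -- value on the diagonal
    intro n
    rw [ha, hg, piBar_mk]
    congr 1
    funext k
    rw [colHom_aElt, if_pos rfl]
  · -- non-divisibility in the quotient
    intro n
    refine ⟨N n, hlt n, ?_⟩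
    intro y hy
    obtain ⟨v, rfl⟩ := QuotientAddGroup.mk'_surjective (finSupp A) y
    rw [← map_nsmul, ← map_nsmul] at hy
    have hy2 : QuotientAddGroup.mk' (finSupp A)
        ((N n).factorial • v - n.factorial • (fun _ => c n : ℕ → A)) = 0 := by
      rw [map_sub, hy, sub_self]
    rw [QuotientAddGroup.mk'_apply, QuotientAddGroup.eq_zero_iff] at hy2
    have hfin : (Function.support
        ((N n).factorial • v - n.factorial • (fun _ => c n : ℕ → A))).Finite := hy2
    obtain ⟨k, hk⟩ := hfin.infinite_compl.nonempty
    have hzero : ((N n).factorial • v - n.factorial • (fun _ => c n : ℕ → A)) k = 0 := by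
      simpa [Function.mem_support] using hk
    have hzero' : (N n).factorial • (v k) - n.factorial • c n = 0 := by
      simpa [Pi.sub_apply, Pi.smul_apply] using hzero
    exact hval n (v k) (sub_eq_zero.mp hzero')
end final

section alg
variable {A : Type} [AddCommGroup A]

/-- The subgroup `m • A`. -/
def mulSub (m : ℕ) : AddSubgroup A :=
  (AddMonoidHom.mk' (fun x : A => m • x) (fun a b => smul_add m a b)).range

lemma mem_mulSub {m : ℕ} {x : A} : x ∈ (mulSub m : AddSubgroup A) ↔ ∃ y, m • y = x := Iff.rfl

lemma almostDivisible_of_retract (m : ℕ) (hm : 1 ≤ m)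
    (r : A →+ (mulSub m : AddSubgroup A))
    (hr : ∀ s : (mulSub m : AddSubgroup A), r s.1 = s)
    (hdiv : DivisibleSubgroup (mulSub m : AddSubgroup A)) :
    AlmostDivisible A := by
  refine ⟨mulSub m, r.ker, ?_, hdiv, ⟨m, hm, ?_⟩⟩
  · constructor
    · rw [_root_.disjoint_iff]
      ext x
      simp only [AddSubgroup.mem_inf, AddSubgroup.mem_bot]
      constructor
      · rintro ⟨hx1, hx2⟩
        have := hr ⟨x, hx1⟩
        rw [AddMonoidHom.mem_ker] at hx2
        rw [hx2] at this
        have := congrArg Subtype.val this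
        simpa using this.symm
      · rintro rfl; exact ⟨zero_mem _, by simp [AddMonoidHom.mem_ker]⟩
    · rw [codisjoint_iff]
      ext x
      simp only [AddSubgroup.mem_top, iff_true]
      rw [AddSubgroup.mem_sup]
      refine ⟨(r x).1, (r x).2, x - (r x).1, ?_, by abel⟩
      rw [AddMonoidHom.mem_ker, map_sub, hr ⟨(r x).1, (r x).2⟩, sub_self]
  · intro x hx
    rw [AddMonoidHom.mem_ker] at hx
    have h1 : m • x ∈ (mulSub m : AddSubgroup A) := ⟨x, rfl⟩
    have h2 := hr ⟨m • x, h1⟩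
    have h3 : r (m • x) = 0 := by rw [map_nsmul, hx, smul_zero]
    rw [h3] at h2
    have := congrArg Subtype.val h2
    simpa using this.symm
end alg

section alg2
variable {A : Type} [AddCommGroup A]

lemma divisible_mulSub (n : ℕ)
    (h : ∀ (c : A) (N : ℕ), n < N → ∃ y : A, N.factorial • y = n.factorial • c) :
    DivisibleSubgroup (mulSub n.factorial : AddSubgroup A) := by
  intro k hk x hx
  obtain ⟨a, ha⟩ := hx
  set N : ℕ := max (k * n.factorial) (n + 1) with hN
  have hdvd : k * n.factorial ∣ N.factorial := by
    have h1 : k * n.factorial ∣ (k * n.factorial).factorial :=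
      Nat.dvd_factorial (Nat.mul_pos hk n.factorial_pos) le_rfl
    exact h1.trans (Nat.factorial_dvd_factorial (le_max_left _ _))
  obtain ⟨t, ht⟩ := hdvd
  obtain ⟨y, hy⟩ := h a N (lt_of_lt_of_le (Nat.lt_succ_self n) (le_max_right _ _))
  refine ⟨n.factorial • (t • y), ⟨t • y, rfl⟩, ?_⟩
  have ha' : n.factorial • a = x := ha
  rw [← ha', ← hy, ht, smul_smul, smul_smul, mul_assoc]

noncomputable def divisibleBy_nat_of_divisibleSubgroup {S : AddSubgroup A}
    (h : DivisibleSubgroup S) : DivisibleBy S ℕ where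
  div a n := if hn : n = 0 then 0 else
      ⟨(h n (Nat.one_le_iff_ne_zero.2 hn) a.1 a.2).choose,
       (h n (Nat.one_le_iff_ne_zero.2 hn) a.1 a.2).choose_spec.1⟩
  div_zero a := by simp
  div_cancel a hn := by
    apply Subtype.ext
    have := (h _ (Nat.one_le_iff_ne_zero.2 hn) a.1 a.2).choose_spec.2
    rw [AddSubgroup.coe_nsmul]
    simp only [dif_neg hn]
    exact this

noncomputable def divisibleBy_int_of_divisibleSubgroup {S : AddSubgroup A}
    (h : DivisibleSubgroup S) : DivisibleBy S ℤ :=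
  letI := divisibleBy_nat_of_divisibleSubgroup h
  AddGroup.divisibleByIntOfDivisibleByNat S

lemma exists_retract {S : AddSubgroup A} (h : DivisibleSubgroup S) :
    ∃ r : A →+ S, ∀ s : S, r s.1 = s := by
  have : DivisibleBy S ℤ := divisibleBy_int_of_divisibleSubgroup h
  have hbaer : Module.Baer ℤ S := Module.Baer.of_divisible S
  have hinj : Module.Injective ℤ S := hbaer.injective
  obtain ⟨g, hg⟩ := hinj.out (S.subtype.toIntLinearMap)
    (Subtype.val_injective) (LinearMap.id)
  exact ⟨g.toAddMonoidHom, fun s => hg s⟩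

lemma exists_nondiv (hA : ¬ AlmostDivisible A) :
    ∀ n : ℕ, ∃ (c : A) (N : ℕ), n < N ∧ ∀ y : A, N.factorial • y ≠ n.factorial • c := by
  by_contra hcon
  push_neg at hcon
  obtain ⟨n, hn⟩ := hcon
  have hdiv : DivisibleSubgroup (mulSub n.factorial : AddSubgroup A) := by
    apply divisible_mulSub
    intro c N hN
    exact hn c N hN
  obtain ⟨r, hr⟩ := exists_retract hdiv
  exact hA (almostDivisible_of_retract n.factorial n.factorial_pos r hr hdiv)
end alg2


/-- Let `A` be an abelian group that is *not* almost divisible.  Then there exist a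
directed poset `T` with `|T| = 2^ℵ₀` and a diagram `X : Tᵒᵖ ⥤ Set_*` of pointed sets
all of whose structure maps are surjective (in particular `X` satisfies the
Mittag-Leffler condition), such that the cokernel `H(X,A)` of the natural map `ρ` is
not cotorsion. -/
theorem stmt18 {A : Type} [AddCommGroup A] (hA : ¬ AlmostDivisible A) :
    ∃ X : DirectedDiagram.{0},
      Cardinal.mk X.T = 2 ^ Cardinal.aleph0 ∧
      (∀ (s t : X.T) (hst : s ≤ t),
        Function.Surjective (X.F.map (homOfLE hst).op).toFun) ∧
      ¬ Cotorsion (↥(glim X.F A) ⧸ (rho X.F A).range) := by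
  classical
  choose c N hlt hval using exists_nondiv hA
  refine ⟨⟨TT, Fdiag⟩, ?_, ?_, ?_⟩
  · have e1 : Cardinal.mk TT = Cardinal.mk (ℕ → ℕ) := Cardinal.mk_congr (Equiv.cast rfl)
    rw [e1, ← Cardinal.power_def, Cardinal.mk_nat, Cardinal.power_self_eq le_rfl]
  · intro s t hst
    exact stepMap_surj (show Opposite.unop (Opposite.op s) ≤ Opposite.unop (Opposite.op t) from hst)
  · exact main_not_cotorsion c N hlt hval
end
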